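/- Let I : {0, 1, …, N} → ℝ be any function with I(0) = 0. For 1 ≤ k ≤ N−1, define γ_k^− = min_{1≤n≤k} (I(k) − I(k−n))/n and γ_k^+ = max_{1≤n≤N−k} (I(k+n) − I(k))/n, and also γ_0^+ = max_{1≤n≤N} I(n)/n and γ_N^− = min_{1≤n≤N} (I(N) − I(N−n))/n. Then Σ_{k=1}^{N−1} max(γ_k^− − γ_k^+, 0) = γ_0^+ − γ_N^−. -/
import Mathlib

open Finset

noncomputable def gmAux (I : ℕ → ℝ) (k : ℕ) : ℝ :=
  sInf ((fun n : ℕ => (I k - I (k - n)) / (n : ℝ)) '' Set.Icc 1 k)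

noncomputable def gpAux (I : ℕ → ℝ) (N k : ℕ) : ℝ :=
  sSup ((fun n : ℕ => (I (k + n) - I k) / (n : ℝ)) '' Set.Icc 1 (N - k))

lemma bddB_aux (f : ℕ → ℝ) (a b : ℕ) : BddBelow (f '' Set.Icc a b) :=
  ((Set.finite_Icc a b).image f).bddBelow

lemma bddA_aux (f : ℕ → ℝ) (a b : ℕ) : BddAbove (f '' Set.Icc a b) :=
  ((Set.finite_Icc a b).image f).bddAbove

lemma neI_aux {f : ℕ → ℝ} {a b : ℕ} (h : a ≤ b) : (f '' Set.Icc a b).Nonempty :=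
  (Set.nonempty_Icc.2 h).image f

lemma key_aux : ∀ N : ℕ, ∀ I : ℕ → ℝ, 1 ≤ N → I 0 = 0 →
    ∑ k ∈ Finset.Icc 1 (N - 1), max (gmAux I k - gpAux I N k) 0
      = gpAux I N 0 - gmAux I N := by
  intro N
  induction N using Nat.strong_induction_on with
  | _ N IH =>
  intro I hN hI0
  obtain ⟨m, hm, hmax⟩ := Finset.exists_max_image (Finset.Icc 1 N)
    (fun n => I n / (n : ℝ)) ⟨1, by simp [hN]⟩
  rw [Finset.mem_Icc] at hm
  obtain ⟨hm1, hmN⟩ := hm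
  have hm0 : (0 : ℝ) < (m : ℝ) := by exact_mod_cast hm1
  -- F1'
  have hkey : ∀ j : ℕ, j ≤ N → I j * m ≤ I m * j := by
    intro j hj
    rcases Nat.eq_zero_or_pos j with h0 | h1
    · simp [h0, hI0]
    · have hj0 : (0 : ℝ) < (j : ℝ) := by exact_mod_cast h1
      have := hmax j (Finset.mem_Icc.2 ⟨h1, hj⟩)
      simpa using (div_le_div_iff₀ hj0 hm0).1 this
  -- (A) gm I m = I m / m
  have hA : gmAux I m = I m / m := by
    apply le_antisymm
    · apply csInf_le (bddB_aux _ _ _)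
      exact ⟨m, ⟨hm1, le_rfl⟩, by simp [hI0]⟩
    · apply le_csInf (neI_aux hm1)
      rintro x ⟨n, ⟨hn1, hnm⟩, rfl⟩
      have hn0 : (0 : ℝ) < (n : ℝ) := by exact_mod_cast hn1
      rw [div_le_div_iff₀ hm0 hn0]
      have h := hkey (m - n) (by omega)
      have hc : ((m - n : ℕ) : ℝ) = (m : ℝ) - (n : ℝ) := by
        push_cast [Nat.cast_sub hnm]; ring
      rw [hc] at h
      nlinarith
  -- (B) gp I N m ≤ I m / m
  have hB : ∀ k, m ≤ k → k ≤ N → gpAux I N k ≤ I k / k → True := fun _ _ _ _ => trivial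
  have hBm : m < N → gpAux I N m ≤ I m / m := by
    intro hmltN
    apply csSup_le (neI_aux (by omega))
    rintro x ⟨n, ⟨hn1, hnm⟩, rfl⟩
    have hn0 : (0 : ℝ) < (n : ℝ) := by exact_mod_cast hn1
    rw [div_le_div_iff₀ hn0 hm0]
    have h := hkey (m + n) (by omega)
    push_cast at h ⊢
    nlinarith
  -- (G) gp I N 0 = I m / m
  have hG : gpAux I N 0 = I m / m := by
    apply le_antisymm
    · apply csSup_le (neI_aux (by omega))
      rintro x ⟨n, ⟨hn1, hnN⟩, rfl⟩
      have hn0 : (0 : ℝ) < (n : ℝ) := by exact_mod_cast hn1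
      rw [div_le_div_iff₀ hn0 hm0]
      have h := hkey n (by omega)
      simp only [Nat.zero_add, hI0] at *
      nlinarith
    · apply le_csSup (bddA_aux _ _ _)
      exact ⟨m, ⟨hm1, by omega⟩, by simp [hI0]⟩
  -- (C) for 1 ≤ k < m : gm I k ≤ gp I N k
  have hC : ∀ k, 1 ≤ k → k < m → gmAux I k ≤ gpAux I N k := by
    intro k hk1 hkm
    have hk0 : (0 : ℝ) < (k : ℝ) := by exact_mod_cast hk1
    have h1 : gmAux I k ≤ I k / k := by
      apply csInf_le (bddB_aux _ _ _)
      exact ⟨k, ⟨hk1, le_rfl⟩, by simp [hI0]⟩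
    have hmk0 : (0 : ℝ) < ((m - k : ℕ) : ℝ) := by
      have : 1 ≤ m - k := by omega
      exact_mod_cast this
    have h2 : I k / k ≤ (I m - I k) / ((m - k : ℕ) : ℝ) := by
      rw [div_le_div_iff₀ hk0 hmk0]
      have h := hkey k (by omega)
      have hc : ((m - k : ℕ) : ℝ) = (m : ℝ) - (k : ℝ) := by
        have : k ≤ m := by omega
        push_cast [Nat.cast_sub this]; ring
      rw [hc]
      nlinarith
    have h3 : (I m - I k) / ((m - k : ℕ) : ℝ) ≤ gpAux I N k := by
      apply le_csSup (bddA_aux _ _ _)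
      refine ⟨m - k, ⟨by omega, by omega⟩, ?_⟩
      have e : k + (m - k) = m := by omega
      simp only [e]
    linarith
  -- J
  set J : ℕ → ℝ := fun j => I (m + j) - I m with hJ
  have hJ0 : J 0 = 0 := by simp [hJ]
  -- (D) for m < k ≤ N : gm I k = gm J (k - m)
  have hD : ∀ k, m < k → k ≤ N → gmAux I k = gmAux J (k - m) := by
    intro k hmk hkN
    have hres : gmAux J (k - m)
        = sInf ((fun n : ℕ => (I k - I (k - n)) / (n : ℝ)) '' Set.Icc 1 (k - m)) := by
      unfold gmAux
      congr 1
      apply Set.image_congr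
      intro n hn
      simp only [Set.mem_Icc] at hn
      have e1 : m + (k - m) = k := by omega
      have e2 : m + (k - m - n) = k - n := by omega
      simp [hJ, e1, e2]
    set a := gmAux J (k - m) with ha
    have hsub : ∀ n, 1 ≤ n → n ≤ k - m → a ≤ (I k - I (k - n)) / (n : ℝ) := by
      intro n h1 h2
      rw [hres]
      exact csInf_le (bddB_aux _ _ _) ⟨n, ⟨h1, h2⟩, rfl⟩
    have hkm0 : (0 : ℝ) < ((k - m : ℕ) : ℝ) := by
      have : 1 ≤ k - m := by omega
      exact_mod_cast this
    have hak : a ≤ (I k - I m) / ((k - m : ℕ) : ℝ) := by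
      have := hsub (k - m) (by omega) le_rfl
      have e : k - (k - m) = m := by omega
      rwa [e] at this
    have hamm : a ≤ I m / m := by
      refine hak.trans ?_
      rw [div_le_div_iff₀ hkm0 hm0]
      have h := hkey k hkN
      have hc : ((k - m : ℕ) : ℝ) = (k : ℝ) - (m : ℝ) := by
        have : m ≤ k := by omega
        push_cast [Nat.cast_sub this]; ring
      rw [hc]
      nlinarith
    apply le_antisymm
    · unfold gmAux
      rw [hres]
      apply csInf_le_csInf (bddB_aux _ _ _) (neI_aux (by omega))
      apply Set.image_mono
      apply Set.Icc_subset_Icc_right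
      omega
    · apply le_csInf (neI_aux (by omega))
      rintro x ⟨n, ⟨hn1, hnk⟩, rfl⟩
      rcases le_or_gt n (k - m) with hcase | hcase
      · exact hsub n hn1 hcase
      · have hn0 : (0 : ℝ) < (n : ℝ) := by exact_mod_cast hn1
        rw [le_div_iff₀ hn0]
        set j := k - n with hj'
        have hjm : j < m := by omega
        have hjI := hkey j (by omega)
        have hcn : (n : ℝ) = (k : ℝ) - (j : ℝ) := by
          have h1 : (j : ℝ) = ((k - n : ℕ) : ℝ) := by rw [hj']
          have : ((k - n : ℕ) : ℝ) = (k : ℝ) - (n : ℝ) := by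
            push_cast [Nat.cast_sub hnk]; ring
          rw [h1, this]; ring
        have hck : ((k - m : ℕ) : ℝ) = (k : ℝ) - (m : ℝ) := by
          have : m ≤ k := by omega
          push_cast [Nat.cast_sub this]; ring
        have hjm' : (j : ℝ) < (m : ℝ) := by exact_mod_cast hjm
        have h1 : a * ((k : ℝ) - m) ≤ I k - I m := by
          have h := (le_div_iff₀ hkm0).1 hak
          rw [hck] at h
          linarith
        have h2 : a * ((m : ℝ) - j) ≤ I m - I j := by
          have hmj0 : (0 : ℝ) < (m : ℝ) - j := by linarith
          have step1 : a * ((m : ℝ) - j) ≤ (I m / m) * ((m : ℝ) - j) :=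
            mul_le_mul_of_nonneg_right hamm (by linarith)
          have step2 : (I m / m) * ((m : ℝ) - j) ≤ I m - I j := by
            rw [div_mul_eq_mul_div, div_le_iff₀ hm0]
            nlinarith
          linarith
        rw [hcn]
        linarith
  -- (E) for m ≤ k ≤ N : gp I N k = gp J (N-m) (k-m)
  have hE : ∀ k, m ≤ k → k ≤ N → gpAux I N k = gpAux J (N - m) (k - m) := by
    intro k hmk hkN
    unfold gpAux
    have e0 : (N - m) - (k - m) = N - k := by omega
    have e2 : m + (k - m) = k := by omega
    have hfe : (fun n : ℕ => (J (k - m + n) - J (k - m)) / (n : ℝ))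
        = fun n : ℕ => (I (k + n) - I k) / (n : ℝ) := by
      funext n
      have e1 : m + (k - m + n) = k + n := by omega
      simp [hJ, e1, e2]
    rw [e0, hfe]
  rcases eq_or_lt_of_le hmN with hmeqN | hmltN
  · -- m = N
    have hsum0 : ∑ k ∈ Finset.Icc 1 (N - 1), max (gmAux I k - gpAux I N k) 0 = 0 := by
      apply Finset.sum_eq_zero
      intro k hk
      rw [Finset.mem_Icc] at hk
      have := hC k hk.1 (by omega)
      simp [max_eq_right (by linarith : gmAux I k - gpAux I N k ≤ 0)]
    rw [hsum0, hG, ← hmeqN, hA]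
    ring
  · -- m < N
    set M := N - m with hM
    have hM1 : 1 ≤ M := by omega
    have hMN : M < N := by omega
    have hIH := IH M hMN J hM1 hJ0
    have hgp0 : gpAux J M 0 = gpAux I N m := by
      have := hE m le_rfl hmN
      rw [Nat.sub_self] at this
      exact this.symm
    have hgmN : gmAux J M = gmAux I N := (hD N hmltN le_rfl).symm
    -- split the sum
    have hsplit : Finset.Icc 1 (N - 1) = Finset.Icc 1 m ∪ Finset.Ioc m (N - 1) := by
      ext x
      simp only [Finset.mem_union, Finset.mem_Icc, Finset.mem_Ioc]
      omega
    have hdisj : Disjoint (Finset.Icc 1 m) (Finset.Ioc m (N - 1)) := by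
      rw [Finset.disjoint_left]
      intro x hx hx'
      simp only [Finset.mem_Icc] at hx
      simp only [Finset.mem_Ioc] at hx'
      omega
    rw [hsplit, Finset.sum_union hdisj]
    have hsum1 : ∑ k ∈ Finset.Icc 1 m, max (gmAux I k - gpAux I N k) 0
        = gmAux I m - gpAux I N m := by
      rw [Finset.sum_eq_single_of_mem m (Finset.mem_Icc.2 ⟨hm1, le_rfl⟩)]
      · have h1 : gpAux I N m ≤ gmAux I m := by
          rw [hA]; exact hBm hmltN
        exact max_eq_left (by linarith)
      · intro b hb hbne
        rw [Finset.mem_Icc] at hb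
        have := hC b hb.1 (by omega)
        exact max_eq_right (by linarith)
    have hsum2 : ∑ k ∈ Finset.Ioc m (N - 1), max (gmAux I k - gpAux I N k) 0
        = ∑ k ∈ Finset.Icc 1 (M - 1), max (gmAux J k - gpAux J M k) 0 := by
      apply Finset.sum_nbij' (fun k => k - m) (fun k => k + m)
      · intro a ha
        simp only [Finset.mem_Ioc] at ha
        simp only [Finset.mem_Icc]
        omega
      · intro a ha
        simp only [Finset.mem_Icc] at ha
        simp only [Finset.mem_Ioc]
        omega
      · intro a ha
        simp only [Finset.mem_Ioc] at ha
        omega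
      · intro a ha
        simp only [Finset.mem_Icc] at ha
        omega
      · intro a ha
        simp only [Finset.mem_Ioc] at ha
        rw [hD a (by omega) (by omega), hE a (by omega) (by omega)]
    rw [hsum1, hsum2, hIH, hgp0, hgmN, hG, hA]
    ring

/-- deterministic telescoping identity for the concave majorant.
For any `I : {0,…,N} → ℝ` with `I 0 = 0`,
`∑_{k=1}^{N-1} (γ_k^- - γ_k^+)₊ = γ_0^+ - γ_N^-`. -/
theorem stmt_8 (N : ℕ) (hN : 1 ≤ N) (I : ℕ → ℝ) (hI0 : I 0 = 0) :
    ∑ k ∈ Finset.Icc 1 (N - 1),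
      max ((sInf ((fun n : ℕ => (I k - I (k - n)) / (n : ℝ)) '' Set.Icc 1 k))
           - (sSup ((fun n : ℕ => (I (k + n) - I k) / (n : ℝ)) '' Set.Icc 1 (N - k))))
        0
      = sSup ((fun n : ℕ => I n / (n : ℝ)) '' Set.Icc 1 N)
        - sInf ((fun n : ℕ => (I N - I (N - n)) / (n : ℝ)) '' Set.Icc 1 N) := by
  have h := key_aux N I hN hI0
  have h1 : gpAux I N 0 = sSup ((fun n : ℕ => I n / (n : ℝ)) '' Set.Icc 1 N) := by
    unfold gpAux
    have : (fun n : ℕ => (I (0 + n) - I 0) / (n : ℝ)) = fun n : ℕ => I n / (n : ℝ) := by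
      funext n; simp [hI0]
    rw [this, Nat.sub_zero]
  rw [h1] at h
  exact h
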